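/- (Shifted KYP certificate, first inequality of (kyph)). Let (A_Ψ, B_Ψ, C_Ψ, D_Ψ) be filter matrices with nz+nw inputs, M = Mᵀ, suppose (Z̃, M̃, C̃, D̃) satisfies the factorization identities for (A_Ψ, B_Ψ, C_Ψ, D_Ψ, M), let (A, B, C, D) be system matrices and (𝒜, ℬ, 𝒞, 𝒟) the combined realization, and set 𝒞̃ := [C̃, D̃ C_F], 𝒟̃ := D̃ D_F. If 𝒳 = 𝒳ᵀ satisfies KYP(𝒳, M; 𝒜, ℬ, 𝒞, 𝒟) ≺ 0, then 𝒳̃ := 𝒳 − diag(Z̃, 0_{n×n}) satisfies KYP(𝒳̃, M̃; 𝒜, ℬ, 𝒞̃, 𝒟̃) ≺ 0. -/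

import Mathlib

open MeasureTheory Matrix

noncomputable section

namespace IQCPaper

/-- Membership in `L2e^p`: measurable and square integrable on every bounded interval. -/
def MemL2e (p : ℕ) (f : ℝ → Fin p → ℝ) : Prop :=
  Measurable f ∧ ∀ T : ℝ, 0 < T → IntegrableOn (fun t => ‖f t‖ ^ 2) (Set.Ioc 0 T) volume

/-- Membership in `L2^p`. -/
def MemL2 (p : ℕ) (f : ℝ → Fin p → ℝ) : Prop :=
  MemL2e p f ∧ IntegrableOn (fun t => ‖f t‖ ^ 2) (Set.Ioi 0) volume

/-- The `L2` norm on `[0,∞)`. -/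
def L2norm (p : ℕ) (f : ℝ → Fin p → ℝ) : ℝ :=
  Real.sqrt (∫ t in Set.Ioi (0 : ℝ), ‖f t‖ ^ 2)

/-- The filter trajectory: absolutely continuous solution of
`ξ' = A ξ + B u`, `ξ(0) = 0`, written in integral form. -/
def IsFilterTraj {k m : Type*} [Fintype k] [Fintype m]
    (A : Matrix k k ℝ) (B : Matrix k m ℝ)
    (u : ℝ → m → ℝ) (ξ : ℝ → k → ℝ) : Prop :=
  Continuous ξ ∧ ξ 0 = 0 ∧
    ∀ t : ℝ, 0 ≤ t → ξ t = ∫ s in (0 : ℝ)..t, (A.mulVec (ξ s) + B.mulVec (u s))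

/-- The KYP matrix. -/
def KYP {n m q : Type*} [Fintype n] [Fintype m] [Fintype q]
    (X : Matrix n n ℝ) (M : Matrix q q ℝ)
    (A : Matrix n n ℝ) (B : Matrix n m ℝ)
    (C : Matrix q n ℝ) (D : Matrix q m ℝ) : Matrix (n ⊕ m) (n ⊕ m) ℝ :=
  fromBlocks (Aᵀ * X + X * A + Cᵀ * M * C) (X * B + Cᵀ * M * D)
    (Bᵀ * X + Dᵀ * M * C) (Dᵀ * M * D)

/-- A real square matrix is Hurwitz if all its complex eigenvalues have negative real part. -/
def IsHurwitz {n : Type*} [Fintype n] [DecidableEq n] (A : Matrix n n ℝ) : Prop :=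
  ∀ μ ∈ spectrum ℂ (A.map Complex.ofReal), μ.re < 0

/-- Finite-horizon IQC with terminal cost matrix `Z`. -/
def FiniteHorizonIQC {k q : Type*} [Fintype k] [Fintype q] (nz nw : ℕ)
    (AΨ : Matrix k k ℝ) (BΨ : Matrix k (Fin nz ⊕ Fin nw) ℝ)
    (CΨ : Matrix q k ℝ) (DΨ : Matrix q (Fin nz ⊕ Fin nw) ℝ)
    (M : Matrix q q ℝ) (Z : Matrix k k ℝ)
    (Δ : (ℝ → Fin nz → ℝ) → (ℝ → Fin nw → ℝ)) : Prop :=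
  ∀ z : ℝ → Fin nz → ℝ, MemL2e nz z →
    ∀ ξ : ℝ → k → ℝ,
      IsFilterTraj AΨ BΨ (fun t => Sum.elim (z t) (Δ z t)) ξ →
      ∀ T : ℝ, 0 < T →
        0 ≤ (∫ t in (0 : ℝ)..T,
              (CΨ.mulVec (ξ t) + DΨ.mulVec (Sum.elim (z t) (Δ z t))) ⬝ᵥ
                M.mulVec (CΨ.mulVec (ξ t) + DΨ.mulVec (Sum.elim (z t) (Δ z t))))
            + (ξ T) ⬝ᵥ Z.mulVec (ξ T)

/-- Factorization identities for `(Z̃, M̃, C̃, D̃)`. -/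
def FactIds {k m q : Type*} [Fintype k] [Fintype m] [Fintype q]
    (AΨ : Matrix k k ℝ) (BΨ : Matrix k m ℝ) (CΨ : Matrix q k ℝ) (DΨ : Matrix q m ℝ)
    (M : Matrix q q ℝ) (Z' : Matrix k k ℝ) (M' : Matrix m m ℝ)
    (C' : Matrix m k ℝ) (D' : Matrix m m ℝ) : Prop :=
  Z'.IsSymm ∧ M'.IsSymm ∧
    AΨᵀ * Z' + Z' * AΨ + CΨᵀ * M * CΨ = C'ᵀ * M' * C' ∧
    Z' * BΨ + CΨᵀ * M * DΨ = C'ᵀ * M' * D' ∧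
    DΨᵀ * M * DΨ = D'ᵀ * M' * D'

/-- `(Z̃, M̃, C̃, D̃)` certifies a canonical factorization of `(AΨ, BΨ, CΨ, DΨ, M)`. -/
def CertifiesCanonical {k m q : Type*} [Fintype k] [Fintype m] [Fintype q]
    [DecidableEq k] [DecidableEq m]
    (AΨ : Matrix k k ℝ) (BΨ : Matrix k m ℝ) (CΨ : Matrix q k ℝ) (DΨ : Matrix q m ℝ)
    (M : Matrix q q ℝ) (Z' : Matrix k k ℝ) (M' : Matrix m m ℝ)
    (C' : Matrix m k ℝ) (D' : Matrix m m ℝ) : Prop :=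
  FactIds AΨ BΨ CΨ DΨ M Z' M' C' D' ∧ IsUnit D' ∧ IsHurwitz (AΨ - BΨ * D'⁻¹ * C')

/-- A causal operator. -/
def Causal (nz nw : ℕ) (Δ : (ℝ → Fin nz → ℝ) → (ℝ → Fin nw → ℝ)) : Prop :=
  ∀ z z' : ℝ → Fin nz → ℝ, ∀ T : ℝ, 0 < T →
    (∀ᵐ t ∂(volume.restrict (Set.Icc (0 : ℝ) T)), z t = z' t) →
    (∀ᵐ t ∂(volume.restrict (Set.Icc (0 : ℝ) T)), Δ z t = Δ z' t)

/-- A bounded operator from `L2^{nz}` to `L2^{nw}`. -/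
def BoundedOp (nz nw : ℕ) (Δ : (ℝ → Fin nz → ℝ) → (ℝ → Fin nw → ℝ)) : Prop :=
  ∃ c : ℝ, 0 ≤ c ∧ ∀ z, MemL2 nz z → MemL2 nw (Δ z) ∧ L2norm nw (Δ z) ≤ c * L2norm nz z


/-- The stacked matrix `C_F = [C; 0]`. -/
def CFmat {n nw nz : ℕ} (C : Matrix (Fin nz) (Fin n) ℝ) :
    Matrix (Fin nz ⊕ Fin nw) (Fin n) ℝ :=
  fromRows C 0

/-- The stacked matrix `D_F = [D; I]`. -/
def DFmat {nw nz : ℕ} (D : Matrix (Fin nz) (Fin nw) ℝ) :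
    Matrix (Fin nz ⊕ Fin nw) (Fin nw) ℝ :=
  fromRows D 1


private lemma fromCols_add' {m n₁ n₂ : Type*} (A A' : Matrix m n₁ ℝ) (B B' : Matrix m n₂ ℝ) :
    fromCols A B + fromCols A' B' = fromCols (A + A') (B + B') := by
  ext i (j | j) <;> simp [fromCols]

/-- Shifted KYP certificate (first inequality of (kyph)). -/
theorem shifted_kyp_certificate
    {n nw nz k q : ℕ}
    (A : Matrix (Fin n) (Fin n) ℝ) (B : Matrix (Fin n) (Fin nw) ℝ)
    (C : Matrix (Fin nz) (Fin n) ℝ) (D : Matrix (Fin nz) (Fin nw) ℝ)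
    (AΨ : Matrix (Fin k) (Fin k) ℝ) (BΨ : Matrix (Fin k) (Fin nz ⊕ Fin nw) ℝ)
    (CΨ : Matrix (Fin q) (Fin k) ℝ) (DΨ : Matrix (Fin q) (Fin nz ⊕ Fin nw) ℝ)
    (M : Matrix (Fin q) (Fin q) ℝ) (hM : M.IsSymm)
    (Z' : Matrix (Fin k) (Fin k) ℝ)
    (M' : Matrix (Fin nz ⊕ Fin nw) (Fin nz ⊕ Fin nw) ℝ)
    (C' : Matrix (Fin nz ⊕ Fin nw) (Fin k) ℝ)
    (D' : Matrix (Fin nz ⊕ Fin nw) (Fin nz ⊕ Fin nw) ℝ)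
    (hfact : FactIds AΨ BΨ CΨ DΨ M Z' M' C' D')
    (𝒳 : Matrix (Fin k ⊕ Fin n) (Fin k ⊕ Fin n) ℝ) (h𝒳 : 𝒳.IsSymm)
    (hKYP : (-(KYP 𝒳 M
        (fromBlocks AΨ (BΨ * CFmat C) 0 A)
        (fromRows (BΨ * DFmat D) B)
        (fromCols CΨ (DΨ * CFmat C))
        (DΨ * DFmat D))).PosDef) :
    (-(KYP (𝒳 - fromBlocks Z' 0 0 0) M'
        (fromBlocks AΨ (BΨ * CFmat C) 0 A)
        (fromRows (BΨ * DFmat D) B)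
        (fromCols C' (D' * CFmat C))
        (D' * DFmat D))).PosDef := by
  obtain ⟨hZs, hMs, h1, h2, h3⟩ := hfact
  set CF := CFmat (nw := nw) C with hCFdef
  set DF := DFmat D with hDFdef
  set P : Matrix (Fin k) (Fin k ⊕ Fin n) ℝ := fromCols 1 0 with hPdef
  set F : Matrix (Fin nz ⊕ Fin nw) (Fin k ⊕ Fin n) ℝ := fromCols 0 CF with hFdef
  set 𝒜 : Matrix (Fin k ⊕ Fin n) (Fin k ⊕ Fin n) ℝ := fromBlocks AΨ (BΨ * CF : Matrix (Fin k) (Fin n) ℝ) 0 A with h𝒜def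
  set ℬ : Matrix (Fin k ⊕ Fin n) (Fin nw) ℝ := fromRows (BΨ * DF) B with hℬdef
  have hPA : P * 𝒜 = AΨ * P + BΨ * F := by
    rw [hPdef, h𝒜def, hFdef, fromCols_mul_fromBlocks, mul_fromCols, mul_fromCols,
      fromCols_add']
    simp
  have hPB : P * ℬ = BΨ * DF := by
    rw [hPdef, hℬdef, fromCols_mul_fromRows]; simp
  have hZhat : (fromBlocks Z' 0 0 0 : Matrix (Fin k ⊕ Fin n) (Fin k ⊕ Fin n) ℝ)
      = Pᵀ * Z' * P := by
    rw [hPdef, transpose_fromCols, fromRows_mul, fromRows_mul_fromCols]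
    simp
  have hC : fromCols CΨ (DΨ * CF) = CΨ * P + DΨ * F := by
    rw [hPdef, hFdef, mul_fromCols, mul_fromCols, fromCols_add']; simp
  have hC' : fromCols C' (D' * CF) = C' * P + D' * F := by
    rw [hPdef, hFdef, mul_fromCols, mul_fromCols, fromCols_add']; simp
  have h2t : D'ᵀ * M' * C' = BΨᵀ * Z' + DΨᵀ * M * CΨ := by
    have h := congrArg Matrix.transpose h2
    simp only [Matrix.transpose_add, Matrix.transpose_mul, Matrix.transpose_transpose,
      hZs.eq, hMs.eq, hM.eq, Matrix.mul_assoc] at h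
    simpa [Matrix.mul_assoc] using h.symm
  have e1 : (fromCols C' (D' * CF))ᵀ * M' * fromCols C' (D' * CF)
      = 𝒜ᵀ * fromBlocks Z' 0 0 0 + fromBlocks Z' 0 0 0 * 𝒜
        + (fromCols CΨ (DΨ * CF))ᵀ * M * fromCols CΨ (DΨ * CF) := by
    rw [hC, hC', hZhat]
    have expand : (C' * P + D' * F)ᵀ * M' * (C' * P + D' * F)
        = Pᵀ * (C'ᵀ * M' * C') * P + Pᵀ * (C'ᵀ * M' * D') * F
          + Fᵀ * (D'ᵀ * M' * C') * P + Fᵀ * (D'ᵀ * M' * D') * F := by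
      simp only [Matrix.transpose_add, Matrix.transpose_mul, Matrix.add_mul, Matrix.mul_add,
        Matrix.mul_assoc]
      abel
    rw [expand, ← h1, ← h2, h2t, ← h3]
    have hAT : 𝒜ᵀ * (Pᵀ * Z' * P) = Pᵀ * (AΨᵀ * Z') * P + Fᵀ * (BΨᵀ * Z') * P := by
      have : 𝒜ᵀ * (Pᵀ * Z' * P) = (P * 𝒜)ᵀ * (Z' * P) := by
        simp only [Matrix.transpose_mul, Matrix.mul_assoc]
      rw [this, hPA]
      simp only [Matrix.transpose_add, Matrix.transpose_mul, Matrix.add_mul, Matrix.mul_assoc]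
    have hZA : Pᵀ * Z' * P * 𝒜 = Pᵀ * (Z' * AΨ) * P + Pᵀ * (Z' * BΨ) * F := by
      have : Pᵀ * Z' * P * 𝒜 = Pᵀ * Z' * (P * 𝒜) := by
        simp only [Matrix.mul_assoc]
      rw [this, hPA]
      simp only [Matrix.mul_add, Matrix.mul_assoc]
    rw [hAT, hZA]
    simp only [Matrix.transpose_add, Matrix.transpose_mul, Matrix.add_mul, Matrix.mul_add,
      Matrix.mul_assoc]
    abel
  have e2 : (fromCols C' (D' * CF))ᵀ * M' * (D' * DF)
      = (fromBlocks Z' 0 0 0 : Matrix (Fin k ⊕ Fin n) (Fin k ⊕ Fin n) ℝ) * ℬ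
        + (fromCols CΨ (DΨ * CF))ᵀ * M * (DΨ * DF) := by
    rw [hC, hC', hZhat]
    have expand : (C' * P + D' * F)ᵀ * M' * (D' * DF)
        = Pᵀ * (C'ᵀ * M' * D') * DF + Fᵀ * (D'ᵀ * M' * D') * DF := by
      simp only [Matrix.transpose_add, Matrix.transpose_mul, Matrix.add_mul, Matrix.mul_add,
        Matrix.mul_assoc]
    rw [expand, ← h2, ← h3]
    have hZB : Pᵀ * Z' * P * ℬ = Pᵀ * (Z' * BΨ) * DF := by
      have : Pᵀ * Z' * P * ℬ = Pᵀ * Z' * (P * ℬ) := by simp only [Matrix.mul_assoc]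
      rw [this, hPB]
      simp only [Matrix.mul_assoc]
    rw [hZB]
    simp only [Matrix.transpose_add, Matrix.transpose_mul, Matrix.add_mul, Matrix.mul_add,
      Matrix.mul_assoc]
    abel
  have hZhatSym : (fromBlocks Z' 0 0 0 : Matrix (Fin k ⊕ Fin n) (Fin k ⊕ Fin n) ℝ)ᵀ
      = fromBlocks Z' 0 0 0 := by
    rw [Matrix.fromBlocks_transpose, hZs.eq]; simp
  have e2t : (D' * DF)ᵀ * M' * fromCols C' (D' * CF)
      = ℬᵀ * (fromBlocks Z' 0 0 0 : Matrix (Fin k ⊕ Fin n) (Fin k ⊕ Fin n) ℝ)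
        + (DΨ * DF)ᵀ * M * fromCols CΨ (DΨ * CF) := by
    have h := congrArg Matrix.transpose e2
    simp only [Matrix.transpose_add, Matrix.transpose_mul, Matrix.transpose_transpose,
      hMs.eq, hM.eq, hZhatSym, Matrix.mul_assoc] at h
    simpa [Matrix.mul_assoc] using h
  have e3 : (D' * DF)ᵀ * M' * (D' * DF) = (DΨ * DF)ᵀ * M * (DΨ * DF) := by
    have lhs : (D' * DF)ᵀ * M' * (D' * DF) = DFᵀ * (D'ᵀ * M' * D') * DF := by
      simp only [Matrix.transpose_mul, Matrix.mul_assoc]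
    rw [lhs, ← h3]
    simp only [Matrix.transpose_mul, Matrix.mul_assoc]
  have b11 : 𝒜ᵀ * (𝒳 - fromBlocks Z' 0 0 0) + (𝒳 - fromBlocks Z' 0 0 0) * 𝒜
        + (fromCols C' (D' * CF))ᵀ * M' * fromCols C' (D' * CF)
      = 𝒜ᵀ * 𝒳 + 𝒳 * 𝒜
        + (fromCols CΨ (DΨ * CF))ᵀ * M * fromCols CΨ (DΨ * CF) := by
    rw [e1]
    simp only [Matrix.mul_sub, Matrix.sub_mul]
    abel
  have b12 : (𝒳 - fromBlocks Z' 0 0 0) * ℬ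
        + (fromCols C' (D' * CF))ᵀ * M' * (D' * DF)
      = 𝒳 * ℬ + (fromCols CΨ (DΨ * CF))ᵀ * M * (DΨ * DF) := by
    rw [e2]
    simp only [Matrix.sub_mul]
    abel
  have b21 : ℬᵀ * (𝒳 - fromBlocks Z' 0 0 0)
        + (D' * DF)ᵀ * M' * fromCols C' (D' * CF)
      = ℬᵀ * 𝒳 + (DΨ * DF)ᵀ * M * fromCols CΨ (DΨ * CF) := by
    rw [e2t]
    simp only [Matrix.mul_sub]
    abel
  have key : KYP (𝒳 - fromBlocks Z' 0 0 0) M' 𝒜 ℬ (fromCols C' (D' * CF)) (D' * DF)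
      = KYP 𝒳 M 𝒜 ℬ (fromCols CΨ (DΨ * CF)) (DΨ * DF) := by
    unfold KYP
    rw [b11, b12, b21, e3]
  change (-(KYP (𝒳 - fromBlocks Z' 0 0 0) M' 𝒜 ℬ (fromCols C' (D' * CF)) (D' * DF))).PosDef
  rw [key]
  exact hKYP


end IQCPaper
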